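/- Let V be a locally finite game graph in which every position has at most d options, where d ≥ 1. If x ∈ V has infinite rank, with extended Sprague-Grundy value 𝒢(x) = ∞(𝒜), then 𝒜 ⊆ {0, 1, …, d} and |𝒜| ≤ d − 1. (Indeed, x must have, for each a ∈ 𝒜, at least one option of finite rank with value a, and additionally at least one option of infinite rank.) -/
import Mathlib


open scoped Classical

universe u

/-- `PosP Γ n` is the set `Pₙ` of positions from which the second player can win
within `n` rounds: `P₀` is the set of terminal positions, and
`Pₙ₊₁ = {x : every option of x has an option in Pₙ}`. -/
def PosP {V : Type*} (Γ : V → Finset V) : ℕ → Set V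
  | 0 => {x | Γ x = ∅}
  | n + 1 => {x | ∀ y ∈ Γ x, ∃ z ∈ Γ y, z ∈ PosP Γ n}

/-- `PosN Γ n` is the set `Nₙ`: for `n ≥ 1`, `Nₙ = {x : some option of x lies in Pₙ₋₁}`. -/
def PosN {V : Type*} (Γ : V → Finset V) : ℕ → Set V
  | 0 => ∅
  | n + 1 => {x | ∃ y ∈ Γ x, y ∈ PosP Γ n}

/-- The P-positions `𝒫 = ⋃ₙ Pₙ` (second player wins). -/
def PPos {V : Type*} (Γ : V → Finset V) : Set V := ⋃ n, PosP Γ n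

/-- The N-positions `𝒩 = ⋃ₙ Nₙ` (first player wins). -/
def NPos {V : Type*} (Γ : V → Finset V) : Set V := ⋃ n, PosN Γ n

/-- The D-positions `𝒟 = V ∖ (𝒫 ∪ 𝒩)` (draws). -/
def DPos {V : Type*} (Γ : V → Finset V) : Set V := (PPos Γ ∪ NPos Γ)ᶜ

/-- The mex (least natural number not attained) of the values `g y`, `y ∈ s`. -/
noncomputable def mexF {V : Type*} (s : Finset V) (g : V → ℕ∞) : ℕ :=
  sInf {n : ℕ | ∀ y ∈ s, g y ≠ (n : ℕ∞)}

/-- The approximants `𝒢ₙ` of the extended Sprague-Grundy function. -/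
noncomputable def Gfun {V : Type*} (Γ : V → Finset V) : ℕ → V → ℕ∞
  | 0 => fun x => if Γ x = ∅ then 0 else ⊤
  | n + 1 => fun x =>
      let m := mexF (Γ x) (Gfun Γ n)
      if ∀ y ∈ Γ x, Gfun Γ n y ≤ (m : ℕ∞) ∨ ∃ z ∈ Γ y, Gfun Γ n z = (m : ℕ∞)
      then (m : ℕ∞) else ⊤

/-- `x` has finite rank with (finite) Sprague-Grundy value `m`:
`𝒢ₙ(x) = m` for all sufficiently large `n`. -/
def HasGVal {V : Type*} (Γ : V → Finset V) (x : V) (m : ℕ) : Prop :=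
  ∃ n₀ : ℕ, ∀ n ≥ n₀, Gfun Γ n x = (m : ℕ∞)

/-- `x` has infinite rank: `𝒢ₙ(x) = ∞` for all `n`. -/
def InfiniteRank {V : Type*} (Γ : V → Finset V) (x : V) : Prop :=
  ∀ n : ℕ, Gfun Γ n x = ⊤

/-- The rank of `x`: the least `n` with `𝒢ₙ(x) < ∞`, or `∞` if there is none. -/
noncomputable def rank {V : Type*} (Γ : V → Finset V) (x : V) : ℕ∞ :=
  sInf ((↑) '' {n : ℕ | Gfun Γ n x ≠ ⊤})

/-- For `x` of infinite rank, the set `𝒜` with `𝒢(x) = ∞(𝒜)`: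
the set of finite Sprague-Grundy values of finite-rank options of `x`. -/
def ValSet {V : Type*} (Γ : V → Finset V) (x : V) : Set ℕ :=
  {a | ∃ y ∈ Γ x, HasGVal Γ y a}

/-- The graph of the disjunctive sum: move in exactly one coordinate. -/
noncomputable def sumGraph {V W : Type*} (Γ : V → Finset V) (Δ : W → Finset W) :
    V × W → Finset (V × W) := fun p =>
  (Γ p.1).image (fun u => (u, p.2)) ∪ (Δ p.2).image (fun w => (p.1, w))

/-- Two (positions of possibly different) games lie in the same outcome class. -/
def SameOutcome {V W : Type*} (Γ : V → Finset V) (x : V) (Δ : W → Finset W) (y : W) : Prop :=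
  (x ∈ PPos Γ ↔ y ∈ PPos Δ) ∧ (x ∈ NPos Γ ↔ y ∈ NPos Δ) ∧ (x ∈ DPos Γ ↔ y ∈ DPos Δ)

/-- Equivalence of games: `G + X` and `H + X` have the same outcome for every
locally finite game `X`. -/
def GameEquiv {V W : Type*} (Γ : V → Finset V) (x : V) (Δ : W → Finset W) (y : W) : Prop :=
  ∀ (X : Type u) (Ξ : X → Finset X) (z : X),
    SameOutcome (sumGraph Γ Ξ) (x, z) (sumGraph Δ Ξ) (y, z)

/-- The nim heap `*m`: positions `0, …, m`, where from `k` one can move to any `j < k`. -/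
def nimGraph (m : ℕ) : Fin (m + 1) → Finset (Fin (m + 1)) :=
  fun k => Finset.univ.filter (fun j => j < k)

/-- The reduced graph `R(V)`: the induced graph on the complement of the P-positions. -/
noncomputable def reducedGraph {V : Type*} (Γ : V → Finset V) :
    {x : V // x ∉ PPos Γ} → Finset {x : V // x ∉ PPos Γ} := fun x =>
  (Γ x.1).subtype (fun y => y ∉ PPos Γ)

/-- The vertex set of `R^{(k)}(V)`: positions which do not have finite rank with
Sprague-Grundy value `< k`. -/
def RkSet {V : Type*} (Γ : V → Finset V) (k : ℕ) : Set V :=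
  {x | ¬ ∃ m < k, HasGVal Γ x m}

/-- The induced game graph `R^{(k)}(V)` on `RkSet Γ k`. -/
noncomputable def RkGraph {V : Type*} (Γ : V → Finset V) (k : ℕ) :
    RkSet Γ k → Finset (RkSet Γ k) := fun x =>
  (Γ x.1).subtype (fun y => y ∈ RkSet Γ k)

/-- `V` is `k`-stable: every infinite-rank position `x`, with `𝒢(x) = ∞(𝒜)`,
has `{0, 1, …, k} ⊆ 𝒜`. -/
def kStable {V : Type*} (Γ : V → Finset V) (k : ℕ) : Prop :=
  ∀ x, InfiniteRank Γ x → ∀ j ≤ k, j ∈ ValSet Γ x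

/-- `l` is a directed walk from `o` to `x` in the graph `Γ`. -/
def IsWalk {V : Type*} (Γ : V → Finset V) (o x : V) (l : List V) : Prop :=
  l.head? = some o ∧ l.getLast? = some x ∧ l.Chain' (fun a b => b ∈ Γ a)

/-- `Γ` is a tree with root `o`: `o` has no incoming arcs, and every vertex is
reached from `o` by a unique directed walk. -/
def IsTree {V : Type*} (Γ : V → Finset V) (o : V) : Prop :=
  (∀ x, o ∉ Γ x) ∧ ∀ x, ∃! l : List V, IsWalk Γ o x l

/-- `f` is a mex labelling: `f x` is the least natural number not attained by `f`
on the options of `x`, for every `x`. -/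
def MexLabelling {V : Type*} (Γ : V → Finset V) (f : V → ℕ) : Prop :=
  ∀ x, f x = sInf {n : ℕ | ∀ y ∈ Γ x, f y ≠ n}

theorem mexF_spec {V : Type*} (s : Finset V) (g : V → ℕ∞) :
    (∀ y ∈ s, g y ≠ (mexF s g : ℕ∞)) ∧ mexF s g ≤ s.card := by
  have hne : ∃ n, n ≤ s.card ∧ ∀ y ∈ s, g y ≠ (n : ℕ∞) := by
    by_contra h
    push_neg at h
    have hsub : (Finset.range (s.card + 1)).image (fun n : ℕ => (n : ℕ∞)) ⊆ s.image g := by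
      intro v hv
      simp only [Finset.mem_image, Finset.mem_range, Nat.lt_succ_iff] at hv ⊢
      obtain ⟨n, hn, rfl⟩ := hv
      obtain ⟨y, hy, hgy⟩ := h n hn
      exact ⟨y, hy, hgy⟩
    have h1 : ((Finset.range (s.card + 1)).image (fun n : ℕ => (n : ℕ∞))).card = s.card + 1 := by
      rw [Finset.card_image_of_injective _ (fun a b => by exact_mod_cast id), Finset.card_range]
    have h2 := Finset.card_le_card hsub
    have h3 := Finset.card_image_le (s := s) (f := g)
    omega
  obtain ⟨n, hn, hP⟩ := hne
  have hmem : mexF s g ∈ {n : ℕ | ∀ y ∈ s, g y ≠ (n : ℕ∞)} :=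
    Nat.sInf_mem ⟨n, hP⟩
  exact ⟨hmem, le_trans (Nat.sInf_le hP) hn⟩

theorem mexF_attained {V : Type*} (s : Finset V) (g : V → ℕ∞) {j : ℕ} (hj : j < mexF s g) :
    ∃ z ∈ s, g z = (j : ℕ∞) := by
  have := Nat.notMem_of_lt_sInf hj
  simp only [Set.mem_setOf_eq, not_forall] at this
  obtain ⟨z, hz, hgz⟩ := this
  exact ⟨z, hz, not_not.mp hgz⟩

theorem Gfun_succ {V : Type*} (Γ : V → Finset V) (n : ℕ) (x : V) :
    Gfun Γ (n + 1) x =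
      if ∀ y ∈ Γ x, Gfun Γ n y ≤ (mexF (Γ x) (Gfun Γ n) : ℕ∞) ∨
          ∃ z ∈ Γ y, Gfun Γ n z = (mexF (Γ x) (Gfun Γ n) : ℕ∞)
      then (mexF (Γ x) (Gfun Γ n) : ℕ∞) else ⊤ := rfl

/-- If `Gfun (n+1) x ≠ ⊤` then it equals the mex and the condition holds. -/
theorem Gfun_succ_ne_top {V : Type*} {Γ : V → Finset V} {n : ℕ} {x : V}
    (h : Gfun Γ (n + 1) x ≠ ⊤) :
    Gfun Γ (n + 1) x = (mexF (Γ x) (Gfun Γ n) : ℕ∞) ∧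
      ∀ y ∈ Γ x, Gfun Γ n y ≤ (mexF (Γ x) (Gfun Γ n) : ℕ∞) ∨
        ∃ z ∈ Γ y, Gfun Γ n z = (mexF (Γ x) (Gfun Γ n) : ℕ∞) := by
  rw [Gfun_succ] at h ⊢
  by_cases hc : ∀ y ∈ Γ x, Gfun Γ n y ≤ (mexF (Γ x) (Gfun Γ n) : ℕ∞) ∨
      ∃ z ∈ Γ y, Gfun Γ n z = (mexF (Γ x) (Gfun Γ n) : ℕ∞)
  · rw [if_pos hc]; exact ⟨rfl, hc⟩
  · rw [if_neg hc] at h; exact absurd rfl h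

theorem Gfun_stab {V : Type*} (Γ : V → Finset V) :
    ∀ n, ∀ x : V, Gfun Γ n x ≠ ⊤ → Gfun Γ (n + 1) x = Gfun Γ n x := by
  intro n
  induction n with
  | zero =>
    intro x h
    have h0 : Gfun Γ 0 x = if Γ x = ∅ then 0 else ⊤ := rfl
    by_cases he : Γ x = ∅
    · have hm : mexF (Γ x) (Gfun Γ 0) = 0 := by
        apply Nat.eq_zero_of_le_zero
        calc mexF (Γ x) (Gfun Γ 0) ≤ (Γ x).card := (mexF_spec _ _).2
        _ = 0 := by rw [he, Finset.card_empty]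
      have hcond : ∀ y ∈ Γ x, Gfun Γ 0 y ≤ (mexF (Γ x) (Gfun Γ 0) : ℕ∞) ∨
          ∃ z ∈ Γ y, Gfun Γ 0 z = (mexF (Γ x) (Gfun Γ 0) : ℕ∞) := by
        intro y hy; rw [he] at hy; exact absurd hy (Finset.notMem_empty y)
      rw [Gfun_succ, if_pos hcond, hm, h0, if_pos he]; rfl
    · rw [h0, if_neg he] at h; exact absurd rfl h
  | succ n ih =>
    intro x h
    obtain ⟨hval, hcond⟩ := Gfun_succ_ne_top h
    set m := mexF (Γ x) (Gfun Γ n) with hm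
    -- (a) no option attains m at level n+1
    have hnot : ∀ y ∈ Γ x, Gfun Γ (n + 1) y ≠ (m : ℕ∞) := by
      intro y hy hcontra
      have hym : Gfun Γ n y ≠ (m : ℕ∞) := (mexF_spec (Γ x) (Gfun Γ n)).1 y hy
      rcases hcond y hy with hle | ⟨z, hz, hgz⟩
      · -- Gfun n y ≤ m, ≠ m at level n; stabilizes, contradiction
        have hfin : Gfun Γ n y ≠ ⊤ := by
          intro ht; rw [ht] at hle; simp at hle
        have := ih y hfin
        rw [this] at hcontra
        exact hym hcontra
      · -- z option of y with Gfun n z = m; but Gfun (n+1) y = m = mex of options of y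
        have hyne : Gfun Γ (n + 1) y ≠ ⊤ := by rw [hcontra]; exact (by simp : (m : ℕ∞) ≠ ⊤)
        obtain ⟨hyval, _⟩ := Gfun_succ_ne_top hyne
        rw [hcontra] at hyval
        have hmy : mexF (Γ y) (Gfun Γ n) = m := by exact_mod_cast hyval.symm
        have := (mexF_spec (Γ y) (Gfun Γ n)).1 z hz
        rw [hmy] at this
        exact this hgz
    -- (b) every k < m is attained at level n+1
    have hatt : ∀ k < m, ∃ y ∈ Γ x, Gfun Γ (n + 1) y = (k : ℕ∞) := by
      intro k hk
      obtain ⟨y, hy, hgy⟩ := mexF_attained (Γ x) (Gfun Γ n) hk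
      have hfin : Gfun Γ n y ≠ ⊤ := by rw [hgy]; simp
      exact ⟨y, hy, by rw [ih y hfin, hgy]⟩
    -- hence mex at level n+1 is m
    have hm' : mexF (Γ x) (Gfun Γ (n + 1)) = m := by
      apply le_antisymm
      · exact Nat.sInf_le hnot
      · by_contra hlt
        push_neg at hlt
        have hmem := Nat.sInf_mem (⟨m, hnot⟩ : {k : ℕ | ∀ y ∈ Γ x, Gfun Γ (n+1) y ≠ (k:ℕ∞)}.Nonempty)
        obtain ⟨y, hy, hgy⟩ := hatt _ hlt
        exact hmem y hy hgy
    -- the condition holds at level n+1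
    have hcond' : ∀ y ∈ Γ x, Gfun Γ (n + 1) y ≤ (mexF (Γ x) (Gfun Γ (n+1)) : ℕ∞) ∨
        ∃ z ∈ Γ y, Gfun Γ (n + 1) z = (mexF (Γ x) (Gfun Γ (n+1)) : ℕ∞) := by
      rw [hm']
      intro y hy
      rcases hcond y hy with hle | ⟨z, hz, hgz⟩
      · left
        have hfin : Gfun Γ n y ≠ ⊤ := by
          intro ht; rw [ht] at hle; simp at hle
        rw [ih y hfin]; exact hle
      · right
        have hfin : Gfun Γ n z ≠ ⊤ := by rw [hgz]; simp
        exact ⟨z, hz, by rw [ih z hfin, hgz]⟩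
    rw [Gfun_succ, if_pos hcond', hm', hval]

theorem Gfun_stab' {V : Type*} (Γ : V → Finset V) {m : ℕ} {x : V}
    (h : Gfun Γ m x ≠ ⊤) : ∀ n, m ≤ n → Gfun Γ n x = Gfun Γ m x := by
  intro n hn
  induction n with
  | zero => rw [Nat.le_zero.mp hn]
  | succ n ih =>
    rcases Nat.lt_or_ge m (n + 1) with hlt | hge
    · have hmn : m ≤ n := Nat.lt_succ_iff.mp hlt
      have h1 := ih hmn
      have h2 : Gfun Γ n x ≠ ⊤ := by rw [h1]; exact h
      rw [Gfun_stab Γ n x h2, h1]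
    · have : m = n + 1 := le_antisymm hn hge
      rw [this]
  

/-- if every position has at most `d ≥ 1` options and `x` has
infinite rank with `𝒢(x) = ∞(𝒜)`, then `𝒜 ⊆ {0, …, d}` and `|𝒜| ≤ d − 1`;
indeed `x` has, for each `a ∈ 𝒜`, an option of finite rank with value `a`, and
additionally an option of infinite rank. -/
theorem stmt18 {V : Type*} (Γ : V → Finset V) (d : ℕ) (hd : 1 ≤ d)
    (hdeg : ∀ x : V, (Γ x).card ≤ d) (x : V) (A : Set ℕ)
    (hinf : InfiniteRank Γ x) (hA : ValSet Γ x = A) :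
    A ⊆ {a : ℕ | a ≤ d} ∧ A.Finite ∧ A.ncard ≤ d - 1 ∧
      (∀ a ∈ A, ∃ y ∈ Γ x, HasGVal Γ y a) ∧ (∃ y ∈ Γ x, InfiniteRank Γ y) := by
  subst hA
  -- uniqueness of Grundy values
  have huniq : ∀ y : V, ∀ a b : ℕ, HasGVal Γ y a → HasGVal Γ y b → a = b := by
    rintro y a b ⟨n₁, h1⟩ ⟨n₂, h2⟩
    have e1 := h1 (max n₁ n₂) (le_max_left _ _)
    have e2 := h2 (max n₁ n₂) (le_max_right _ _)
    rw [e1] at e2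
    exact_mod_cast e2
  -- values of options are at most d
  have hsub : ValSet Γ x ⊆ {a : ℕ | a ≤ d} := by
    rintro a ⟨y, hy, n₀, hn₀⟩
    have he := hn₀ (n₀ + 1) (Nat.le_succ _)
    have hne : Gfun Γ (n₀ + 1) y ≠ ⊤ := by rw [he]; simp
    obtain ⟨hval, -⟩ := Gfun_succ_ne_top hne
    rw [he] at hval
    have : a = mexF (Γ y) (Gfun Γ n₀) := by exact_mod_cast hval
    calc a = mexF (Γ y) (Gfun Γ n₀) := this
      _ ≤ (Γ y).card := (mexF_spec _ _).2
      _ ≤ d := hdeg y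
  have hfin : (ValSet Γ x).Finite := (Set.finite_Iic d).subset hsub
  -- x has an option of infinite rank
  have hinfopt : ∃ y ∈ Γ x, InfiniteRank Γ y := by
    by_contra hcon
    push_neg at hcon
    simp only [InfiniteRank, not_forall] at hcon
    -- a common stabilization level N for all options
    set f : V → ℕ := fun y => if h : ∃ n, Gfun Γ n y ≠ ⊤ then h.choose else 0 with hf
    set N := (Γ x).sup f with hN
    have hstabN : ∀ y ∈ Γ x, Gfun Γ N y ≠ ⊤ := by
      intro y hy
      obtain ⟨n, hn⟩ := hcon y hy
      have hex : ∃ n, Gfun Γ n y ≠ ⊤ := ⟨n, hn⟩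
      have hfy : Gfun Γ (f y) y ≠ ⊤ := by
        rw [hf]; simp only [dif_pos hex]; exact hex.choose_spec
      have hle : f y ≤ N := Finset.le_sup hy
      rw [Gfun_stab' Γ hfy N hle]; exact hfy
    -- the condition at level N holds, so Gfun (N+1) x ≠ ⊤
    set m := mexF (Γ x) (Gfun Γ N) with hm
    have hcond : ∀ y ∈ Γ x, Gfun Γ N y ≤ (m : ℕ∞) ∨
        ∃ z ∈ Γ y, Gfun Γ N z = (m : ℕ∞) := by
      intro y hy
      rcases le_or_gt (Gfun Γ N y) (m : ℕ∞) with hle | hgt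
      · exact Or.inl hle
      · right
        have hne := hstabN y hy
        match N, hne, hgt with
        | 0, hne, hgt =>
          exfalso
          have h0 : Gfun Γ 0 y = if Γ y = ∅ then 0 else ⊤ := rfl
          by_cases he : Γ y = ∅
          · rw [h0, if_pos he] at hgt
            exact absurd hgt (by simp)
          · rw [h0, if_neg he] at hne; exact hne rfl
        | M + 1, hne, hgt =>
          obtain ⟨hval, -⟩ := Gfun_succ_ne_top hne
          rw [hval] at hgt
          have hmlt : m < mexF (Γ y) (Gfun Γ M) := by exact_mod_cast hgt
          obtain ⟨z, hz, hgz⟩ := mexF_attained (Γ y) (Gfun Γ M) hmlt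
          refine ⟨z, hz, ?_⟩
          have hzfin : Gfun Γ M z ≠ ⊤ := by rw [hgz]; simp
          rw [Gfun_stab Γ M z hzfin, hgz]
    have : Gfun Γ (N + 1) x = (m : ℕ∞) := by rw [Gfun_succ, if_pos hcond]
    rw [hinf (N + 1)] at this
    exact absurd this.symm (by simp)
  -- cardinality bound
  obtain ⟨yI, hyI, hyIinf⟩ := hinfopt
  have hncard : (ValSet Γ x).ncard ≤ d - 1 := by
    set w : ℕ → V := fun a => if h : ∃ y ∈ Γ x, HasGVal Γ y a then h.choose else x with hw
    have hwprop : ∀ a ∈ ValSet Γ x, w a ∈ Γ x ∧ HasGVal Γ (w a) a := by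
      intro a ha
      have hex : ∃ y ∈ Γ x, HasGVal Γ y a := ha
      rw [hw]; simp only [dif_pos hex]
      exact hex.choose_spec
    have hinjOn : Set.InjOn w (ValSet Γ x) := by
      intro a ha b hb hab
      have h1 := (hwprop a ha).2
      have h2 := (hwprop b hb).2
      rw [hab] at h1
      exact huniq _ _ _ h1 h2
    have himg : w '' ValSet Γ x ⊆ ↑((Γ x).erase yI) := by
      rintro v ⟨a, ha, rfl⟩
      obtain ⟨hmem, hgv⟩ := hwprop a ha
      have hne : w a ≠ yI := by
        intro he
        obtain ⟨n₀, hn₀⟩ := hgv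
        have := hn₀ n₀ le_rfl
        rw [he, hyIinf n₀] at this
        exact absurd this.symm (by simp)
      exact Finset.mem_coe.mpr (Finset.mem_erase.mpr ⟨hne, hmem⟩)
    calc (ValSet Γ x).ncard = (w '' ValSet Γ x).ncard := (Set.ncard_image_of_injOn hinjOn).symm
      _ ≤ (↑((Γ x).erase yI) : Set V).ncard := Set.ncard_le_ncard himg ((Γ x).erase yI).finite_toSet
      _ = ((Γ x).erase yI).card := Set.ncard_coe_finset _
      _ = (Γ x).card - 1 := Finset.card_erase_of_mem hyI
      _ ≤ d - 1 := Nat.sub_le_sub_right (hdeg x) 1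
  exact ⟨hsub, hfin, hncard, fun a ha => ha, ⟨yI, hyI, hyIinf⟩⟩
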